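/- Let d ≥ 1 and let Y, Z : ℝ² → ℝ^d be C¹ functions of (t,s). Define q = Y·Z and h = √(1 + |Y|² + |Z|² + q²). If Y and Z satisfy ∂ₜY + ∂ₛ((Z + qY)/h) = 0 and ∂ₜZ + ∂ₛ((Y + qZ)/h) = 0 on ℝ², then ∂ₜh + ∂ₛq = 0 on ℝ². -/

import Mathlib

open scoped RealInnerProductSpace

/-- Partial derivative in the first variable `t` of a map on `ℝ × ℝ`. -/
noncomputable def pt {F : Type*} [NormedAddCommGroup F] [NormedSpace ℝ F]
    (X : ℝ × ℝ → F) (p : ℝ × ℝ) : F := deriv (fun t => X (t, p.2)) p.1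

/-- Partial derivative in the second variable `s` of a map on `ℝ × ℝ`. -/
noncomputable def ps {F : Type*} [NormedAddCommGroup F] [NormedSpace ℝ F]
    (X : ℝ × ℝ → F) (p : ℝ × ℝ) : F := deriv (fun s => X (p.1, s)) p.2

/-- `q = Y·Z`. -/
noncomputable def qf {d : ℕ} (Y Z : ℝ × ℝ → EuclideanSpace ℝ (Fin d)) (p : ℝ × ℝ) : ℝ :=
  ⟪Y p, Z p⟫

/-- `h = √(1 + |Y|² + |Z|² + q²)`. -/
noncomputable def hf {d : ℕ} (Y Z : ℝ × ℝ → EuclideanSpace ℝ (Fin d)) (p : ℝ × ℝ) : ℝ :=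
  Real.sqrt (1 + ‖Y p‖ ^ 2 + ‖Z p‖ ^ 2 + qf Y Z p ^ 2)

section aux

variable {F : Type*} [NormedAddCommGroup F] [NormedSpace ℝ F]

lemma hasDerivAt_pt {X : ℝ × ℝ → F} (hX : Differentiable ℝ X) (p : ℝ × ℝ) :
    HasDerivAt (fun t => X (t, p.2)) (pt X p) p.1 := by
  have h : DifferentiableAt ℝ (fun t => X (t, p.2)) p.1 :=
    (hX (p.1, p.2)).comp p.1 (DifferentiableAt.prodMk differentiableAt_id (differentiableAt_const _))
  exact h.hasDerivAt

lemma hasDerivAt_ps {X : ℝ × ℝ → F} (hX : Differentiable ℝ X) (p : ℝ × ℝ) :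
    HasDerivAt (fun s => X (p.1, s)) (ps X p) p.2 := by
  have h : DifferentiableAt ℝ (fun s => X (p.1, s)) p.2 :=
    (hX (p.1, p.2)).comp p.2 (DifferentiableAt.prodMk (differentiableAt_const _) differentiableAt_id)
  exact h.hasDerivAt

end aux

/-- The additional conservation law `∂ₜh + ∂ₛq = 0` holds for every `C¹` solution
of the relativistic string equation in conservative form. -/
theorem statement8 (d : ℕ) (hd : 1 ≤ d)
    (Y Z : ℝ × ℝ → EuclideanSpace ℝ (Fin d))
    (hY : ContDiff ℝ 1 Y) (hZ : ContDiff ℝ 1 Z)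
    (heq1 : ∀ p : ℝ × ℝ,
      pt Y p + ps (fun q => (hf Y Z q)⁻¹ • (Z q + qf Y Z q • Y q)) p = 0)
    (heq2 : ∀ p : ℝ × ℝ,
      pt Z p + ps (fun q => (hf Y Z q)⁻¹ • (Y q + qf Y Z q • Z q)) p = 0) :
    ∀ p : ℝ × ℝ, pt (hf Y Z) p + ps (qf Y Z) p = 0 := by
  set A : ℝ × ℝ → EuclideanSpace ℝ (Fin d) :=
    fun q => (hf Y Z q)⁻¹ • (Z q + qf Y Z q • Y q) with hA
  set B : ℝ × ℝ → EuclideanSpace ℝ (Fin d) :=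
    fun q => (hf Y Z q)⁻¹ • (Y q + qf Y Z q • Z q) with hB
  -- basic positivity
  have hglb : ∀ p : ℝ × ℝ, 0 < 1 + ‖Y p‖ ^ 2 + ‖Z p‖ ^ 2 + qf Y Z p ^ 2 := by
    intro p; positivity
  have hfpos : ∀ p : ℝ × ℝ, 0 < hf Y Z p := fun p => Real.sqrt_pos.2 (hglb p)
  have hfne : ∀ p : ℝ × ℝ, hf Y Z p ≠ 0 := fun p => (hfpos p).ne'
  have hfsq : ∀ p : ℝ × ℝ,
      hf Y Z p ^ 2 = 1 + ‖Y p‖ ^ 2 + ‖Z p‖ ^ 2 + qf Y Z p ^ 2 := fun p =>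
    Real.sq_sqrt (hglb p).le
  -- smoothness
  have hq : ContDiff ℝ 1 (qf Y Z) := hY.inner ℝ hZ
  have hg : ContDiff ℝ 1 (fun p : ℝ × ℝ =>
      1 + ‖Y p‖ ^ 2 + ‖Z p‖ ^ 2 + qf Y Z p ^ 2) := by
    have h1 : ContDiff ℝ 1 (fun p : ℝ × ℝ => (‖Y p‖ : ℝ) ^ 2) := by
      simp only [← real_inner_self_eq_norm_sq]
      exact hY.inner ℝ hY
    have h2 : ContDiff ℝ 1 (fun p : ℝ × ℝ => (‖Z p‖ : ℝ) ^ 2) := by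
      simp only [← real_inner_self_eq_norm_sq]
      exact hZ.inner ℝ hZ
    exact ((contDiff_const.add h1).add h2).add (hq.pow 2)
  have hh : ContDiff ℝ 1 (hf Y Z) := hg.sqrt fun p => (hglb p).ne'
  have hAc : ContDiff ℝ 1 A := (hh.inv hfne).smul (hZ.add (hq.smul hY))
  have hBc : ContDiff ℝ 1 B := (hh.inv hfne).smul (hY.add (hq.smul hZ))
  -- the key algebraic identity : q = ⟪A, B⟫
  have hqAB : qf Y Z = fun p => ⟪A p, B p⟫ := by
    funext p
    have key : ⟪Z p + qf Y Z p • Y p, Y p + qf Y Z p • Z p⟫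
        = qf Y Z p * hf Y Z p ^ 2 := by
      have hq0 : (⟪Y p, Z p⟫ : ℝ) = qf Y Z p := rfl
      rw [hfsq p]
      simp only [inner_add_left, inner_add_right, real_inner_smul_left,
        real_inner_smul_right, real_inner_self_eq_norm_sq]
      rw [show (⟪Z p, Y p⟫ : ℝ) = qf Y Z p from (real_inner_comm _ _).trans hq0]
      simp only [hq0]
      ring
    have expand : (⟪A p, B p⟫ : ℝ)
        = (hf Y Z p)⁻¹ * ((hf Y Z p)⁻¹ * (qf Y Z p * hf Y Z p ^ 2)) := by
      rw [hA, hB]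
      rw [real_inner_smul_left, real_inner_smul_right, key]
    rw [expand]
    field_simp
    rw [mul_div_assoc, div_self (hfne p), mul_one]
  intro p
  -- derivatives along the t-line
  have hY1 := hasDerivAt_pt (hY.differentiable one_ne_zero) p
  have hZ1 := hasDerivAt_pt (hZ.differentiable one_ne_zero) p
  have hq1 : HasDerivAt (fun t => qf Y Z (t, p.2))
      (⟪Y p, pt Z p⟫ + ⟪pt Y p, Z p⟫) p.1 := hY1.inner ℝ hZ1
  have hg1 : HasDerivAt (fun t => 1 + ‖Y (t, p.2)‖ ^ 2 + ‖Z (t, p.2)‖ ^ 2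
        + qf Y Z (t, p.2) ^ 2)
      ((⟪Y p, pt Y p⟫ + ⟪pt Y p, Y p⟫) + (⟪Z p, pt Z p⟫ + ⟪pt Z p, Z p⟫)
        + 2 * qf Y Z p ^ 1 * (⟪Y p, pt Z p⟫ + ⟪pt Y p, Z p⟫)) p.1 := by
    have e1 : HasDerivAt (fun t => (‖Y (t, p.2)‖ : ℝ) ^ 2)
        (⟪Y p, pt Y p⟫ + ⟪pt Y p, Y p⟫) p.1 := by
      simp only [← real_inner_self_eq_norm_sq]
      exact hY1.inner ℝ hY1
    have e2 : HasDerivAt (fun t => (‖Z (t, p.2)‖ : ℝ) ^ 2)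
        (⟪Z p, pt Z p⟫ + ⟪pt Z p, Z p⟫) p.1 := by
      simp only [← real_inner_self_eq_norm_sq]
      exact hZ1.inner ℝ hZ1
    exact ((e1.const_add 1).add e2).add (hq1.pow 2)
  have hh1 : HasDerivAt (fun t => hf Y Z (t, p.2))
      (((⟪Y p, pt Y p⟫ + ⟪pt Y p, Y p⟫) + (⟪Z p, pt Z p⟫ + ⟪pt Z p, Z p⟫)
        + 2 * qf Y Z p ^ 1 * (⟪Y p, pt Z p⟫ + ⟪pt Y p, Z p⟫))
        / (2 * hf Y Z p)) p.1 := by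
    have := hg1.sqrt (hglb p).ne'
    simpa [hf] using this
  have hpt : pt (hf Y Z) p = ⟪B p, pt Y p⟫ + ⟪A p, pt Z p⟫ := by
    rw [show pt (hf Y Z) p = _ from hh1.deriv]
    simp only [hA, hB, real_inner_smul_left, inner_add_left, real_inner_smul_left, pow_one]
    rw [real_inner_comm (pt Y p) (Y p), real_inner_comm (pt Z p) (Z p),
      real_inner_comm (pt Y p) (Z p)]
    field_simp
    ring
  -- derivative along the s-line of q = ⟪A, B⟫
  have hA2 := hasDerivAt_ps (hAc.differentiable one_ne_zero) p
  have hB2 := hasDerivAt_ps (hBc.differentiable one_ne_zero) p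
  have hq2 : HasDerivAt (fun s => qf Y Z (p.1, s))
      (⟪A p, ps B p⟫ + ⟪ps A p, B p⟫) p.2 := by
    rw [hqAB]
    exact hA2.inner ℝ hB2
  have hps : ps (qf Y Z) p = ⟪A p, ps B p⟫ + ⟪ps A p, B p⟫ := hq2.deriv
  rw [hpt, hps]
  have k1 : ps A p = -pt Y p := (neg_eq_of_add_eq_zero_right (heq1 p)).symm
  have k2 : ps B p = -pt Z p := (neg_eq_of_add_eq_zero_right (heq2 p)).symm
  rw [k1, k2, inner_neg_right, inner_neg_left, real_inner_comm (pt Y p) (B p)]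
  ring
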